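/- Let 0 ≤ d < k < ∞ be integers, let n = k-d, let j be an integer with 0 ≤ j ≤ n, and let p ∈ (0,1). Define L_in = n·p^n + Σ_{t=1}^{n} (n-t+1)·p^{n-t}·(1-p) and L_out^j = Σ_{i=0}^{j-1} (k-i+1)·p^{n-i-1}·(1-p) + (k-j+1)·p^n + Σ_{i=j+1}^{n} (k-i+1)·p^{n-i}·(1-p). Then h(p)·L_in / L_out^j = h(p)·(1-p^n) / (1-p^n + (1-p)·(p^{n-j} - j·p^n + d)). (This is the closed-form expression for the average information rate R_j(p,d,k) of the symbol sliding algorithm SS(j).) -/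

import Mathlib

/-- Binary entropy function. -/
noncomputable def binEnt (p : ℝ) : ℝ := -p * Real.logb 2 p - (1 - p) * Real.logb 2 (1 - p)

private lemma geomG (p : ℝ) (m : ℕ) : (1 - p) * ∑ i ∈ Finset.range m, p ^ i = 1 - p ^ m := by
  linear_combination -geom_sum_mul p m

private lemma sumA (p : ℝ) (m : ℕ) :
    (1 - p) ^ 2 * ∑ i ∈ Finset.range m, ((i : ℝ) + 1) * p ^ i
      = 1 - ((m : ℝ) + 1) * p ^ m + (m : ℝ) * p ^ (m + 1) := by
  induction m with
  | zero => simp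
  | succ m ih =>
    rw [Finset.sum_range_succ]
    push_cast
    ring_nf
    ring_nf at ih
    linear_combination ih

private lemma sumB (p : ℝ) (m : ℕ) :
    (1 - p) ^ 2 * ∑ i ∈ Finset.range m, (i : ℝ) * p ^ i
      = p - (m : ℝ) * p ^ m + ((m : ℝ) - 1) * p ^ (m + 1) := by
  have h : ∀ i ∈ Finset.range m, ((i : ℝ) + 1) * p ^ i = (i : ℝ) * p ^ i + p ^ i := by
    intro i _; ring
  have hA := sumA p m
  rw [Finset.sum_congr rfl h, Finset.sum_add_distrib] at hA
  have hG := geomG p m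
  linear_combination hA - (1 - p) * hG

/-- Closed-form expression for the average information rate `R_j(p,d,k)` of the symbol
sliding algorithm SS(j). -/
theorem stmt_14 (d k n j : ℕ) (hdk : d < k) (hn : n = k - d) (hj : j ≤ n)
    (p : ℝ) (hp0 : 0 < p) (hp1 : p < 1)
    (Lin Lout : ℝ)
    (hLin : Lin = (n : ℝ) * p ^ n +
      ∑ t ∈ Finset.Icc 1 n, ((n - t + 1 : ℕ) : ℝ) * p ^ (n - t) * (1 - p))
    (hLout : Lout =
      (∑ i ∈ Finset.range j, ((k - i + 1 : ℕ) : ℝ) * p ^ (n - i - 1) * (1 - p)) +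
        ((k - j + 1 : ℕ) : ℝ) * p ^ n +
        ∑ i ∈ Finset.Icc (j + 1) n, ((k - i + 1 : ℕ) : ℝ) * p ^ (n - i) * (1 - p)) :
    binEnt p * Lin / Lout =
      binEnt p * (1 - p ^ n) /
        (1 - p ^ n + (1 - p) * (p ^ (n - j) - (j : ℝ) * p ^ n + (d : ℝ))) := by
  have hk : k = n + d := by omega
  have h1p : (1 : ℝ) - p ≠ 0 := by linarith
  -- Lin * (1-p) = 1 - p^n
  have hLinSum : ∑ t ∈ Finset.Icc 1 n, ((n - t + 1 : ℕ) : ℝ) * p ^ (n - t) * (1 - p)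
      = (∑ i ∈ Finset.range n, ((i : ℝ) + 1) * p ^ i) * (1 - p) := by
    rw [← Finset.sum_mul]
    congr 1
    refine Finset.sum_nbij' (fun t => n - t) (fun i => n - i) ?_ ?_ ?_ ?_ ?_
    · intro a ha; simp only [Finset.mem_Icc] at ha; simp only [Finset.mem_range]; omega
    · intro a ha; simp only [Finset.mem_range] at ha; simp only [Finset.mem_Icc]; omega
    · intro a ha; simp only [Finset.mem_Icc] at ha; show n - (n - a) = a; omega
    · intro a ha; simp only [Finset.mem_range] at ha; show n - (n - a) = a; omega
    · intro a ha; simp only [Finset.mem_Icc] at ha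
      show ((n - a + 1 : ℕ) : ℝ) * p ^ (n - a) = (((n - a : ℕ) : ℝ) + 1) * p ^ (n - a)
      push_cast
      ring
  have hLin2 : Lin * (1 - p) = 1 - p ^ n := by
    have h : ∀ i ∈ Finset.range n, ((i : ℝ) + 1) * p ^ i = (i : ℝ) * p ^ i + p ^ i := by
      intro i _; ring
    rw [hLin, hLinSum]
    linear_combination sumA p n
  -- Lout * (1-p) = D
  have hS1 : ∑ i ∈ Finset.range j, ((k - i + 1 : ℕ) : ℝ) * p ^ (n - i - 1) * (1 - p)
      = (p ^ (n - j) * (((k : ℝ) - j + 2) * ∑ i ∈ Finset.range j, p ^ i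
          + ∑ i ∈ Finset.range j, (i : ℝ) * p ^ i)) * (1 - p) := by
    rw [← Finset.sum_mul]
    congr 1
    rw [← Finset.sum_range_reflect, mul_add, Finset.mul_sum, Finset.mul_sum, Finset.mul_sum,
      ← Finset.sum_add_distrib]
    refine Finset.sum_congr rfl ?_
    intro i hi
    simp only [Finset.mem_range] at hi
    have e1 : k - (j - 1 - i) + 1 = (k - j) + (i + 2) := by omega
    have e2 : n - (j - 1 - i) - 1 = (n - j) + i := by omega
    rw [e1, e2, pow_add]
    have e3 : ((k - j : ℕ) : ℝ) = (k : ℝ) - (j : ℝ) := by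
      rw [Nat.cast_sub (by omega)]
    push_cast [e3]
    ring
  have hS3 : ∑ i ∈ Finset.Icc (j + 1) n, ((k - i + 1 : ℕ) : ℝ) * p ^ (n - i) * (1 - p)
      = (((d : ℝ) + 1) * ∑ s ∈ Finset.range (n - j), p ^ s
          + ∑ s ∈ Finset.range (n - j), (s : ℝ) * p ^ s) * (1 - p) := by
    rw [← Finset.sum_mul]
    congr 1
    rw [Finset.mul_sum, ← Finset.sum_add_distrib]
    refine Finset.sum_nbij' (fun i => n - i) (fun s => n - s) ?_ ?_ ?_ ?_ ?_
    · intro a ha; simp only [Finset.mem_Icc] at ha; simp only [Finset.mem_range]; omega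
    · intro a ha; simp only [Finset.mem_range] at ha; simp only [Finset.mem_Icc]; omega
    · intro a ha; simp only [Finset.mem_Icc] at ha; show n - (n - a) = a; omega
    · intro a ha; simp only [Finset.mem_range] at ha; show n - (n - a) = a; omega
    · intro a ha; simp only [Finset.mem_Icc] at ha
      show ((k - a + 1 : ℕ) : ℝ) * p ^ (n - a)
          = ((d : ℝ) + 1) * p ^ (n - a) + ((n - a : ℕ) : ℝ) * p ^ (n - a)
      have e1 : k - a + 1 = d + (n - a) + 1 := by omega
      rw [e1]
      push_cast
      ring
  have hkj : ((k - j + 1 : ℕ) : ℝ) = (k : ℝ) - (j : ℝ) + 1 := by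
    push_cast [Nat.cast_sub (by omega : j ≤ k)]
    ring
  have hpn : p ^ (n - j) * p ^ j = p ^ n := by
    rw [← pow_add]; congr 1; omega
  have hnj : ((n - j : ℕ) : ℝ) = (n : ℝ) - (j : ℝ) := Nat.cast_sub hj
  have hLout2 : Lout * (1 - p)
      = 1 - p ^ n + (1 - p) * (p ^ (n - j) - (j : ℝ) * p ^ n + (d : ℝ)) := by
    rw [hLout, hS1, hS3, hkj]
    have hGj := geomG p j
    have hBj := sumB p j
    have hGm := geomG p (n - j)
    have hBm := sumB p (n - j)
    rw [hnj] at hBm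
    have hkd : (k : ℝ) = (n : ℝ) + (d : ℝ) := by exact_mod_cast congrArg (Nat.cast : ℕ → ℝ) hk
    linear_combination (p ^ (n - j) * ((k : ℝ) - j + 2) * (1 - p)) * hGj
      + (p ^ (n - j)) * hBj + (((d : ℝ) + 1) * (1 - p)) * hGm + hBm
      + (((k : ℝ) + 1) * p - ((k : ℝ) + 2)) * hpn
      + (p ^ (n - j) * (1 - p)) * hkd
  -- conclude
  set D : ℝ := 1 - p ^ n + (1 - p) * (p ^ (n - j) - (j : ℝ) * p ^ n + (d : ℝ)) with hD
  by_cases hD0 : D = 0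
  · have hL0 : Lout = 0 := by
      have h := hLout2
      rw [hD0] at h
      exact (mul_eq_zero.mp h).resolve_right h1p
    rw [hL0, hD0, div_zero, div_zero]
  · have hL0 : Lout ≠ 0 := by
      intro h
      rw [h, zero_mul] at hLout2
      exact hD0 hLout2.symm
    rw [div_eq_div_iff hL0 hD0]
    linear_combination binEnt p * Lout * hLin2 - binEnt p * Lin * hLout2
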